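/- Let A, B be self-adjoint n × n matrices, δ > 0, α ≤ β real, and suppose S₁ ⊂ [α, β] and S₂ ⊂ (-∞, α - δ] ∪ [β + δ, ∞). Then ‖E_{S₁}(A) E_{S₂}(B)‖ ≤ (1/δ)·‖A - B‖ (Davis–Kahan sin θ theorem, interval form). -/

import Mathlib

/-- The ℓ²→ℓ² operator norm of a square complex matrix. -/
noncomputable def opNorm {n : ℕ} (A : Matrix (Fin n) (Fin n) ℂ) : ℝ :=
  ‖Matrix.toEuclideanCLM (𝕜 := ℂ) A‖

open Classical in
/-- The spectral projection of a Hermitian matrix `D` onto a set `S ⊆ ℝ`. -/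
noncomputable def spectralProj {n : ℕ} {D : Matrix (Fin n) (Fin n) ℂ}
    (hD : D.IsHermitian) (S : Set ℝ) : Matrix (Fin n) (Fin n) ℂ :=
  (hD.eigenvectorUnitary : Matrix (Fin n) (Fin n) ℂ) *
    (Matrix.diagonal fun i => if hD.eigenvalues i ∈ S then (1 : ℂ) else 0) *
    star (hD.eigenvectorUnitary : Matrix (Fin n) (Fin n) ℂ)

open scoped Matrix.Norms.L2Operator in
lemma diag_norm_le' {n : ℕ} (d : Fin n → ℂ) {c : ℝ} (hc : 0 ≤ c)
    (h : ∀ i, ‖d i‖ ≤ c) : ‖Matrix.diagonal d‖ ≤ c := by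
  rw [Matrix.cstar_norm_def]
  refine ContinuousLinearMap.opNorm_le_bound _ hc fun x => ?_
  have hx : ∀ i, (Matrix.toEuclideanCLM (𝕜 := ℂ) (Matrix.diagonal d) x) i = d i * x i := by
    intro i
    have h2 := congrFun (Matrix.ofLp_toEuclideanCLM (𝕜 := ℂ) (Matrix.diagonal d) x) i
    simpa [Matrix.toLin'_apply, Matrix.mulVec_diagonal] using h2
  rw [EuclideanSpace.norm_eq, EuclideanSpace.norm_eq,
    show c * Real.sqrt (∑ i, ‖x i‖ ^ 2) = Real.sqrt (c ^ 2 * ∑ i, ‖x i‖ ^ 2) by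
      rw [Real.sqrt_mul (sq_nonneg c), Real.sqrt_sq hc]]
  apply Real.sqrt_le_sqrt
  rw [Finset.mul_sum]
  apply Finset.sum_le_sum
  intro i _
  rw [hx i, norm_mul, mul_pow]
  have h5 : ‖d i‖ ^ 2 ≤ c ^ 2 := by
    have := h i; have h4 := norm_nonneg (d i); nlinarith
  exact mul_le_mul_of_nonneg_right h5 (sq_nonneg _)

set_option maxHeartbeats 1000000 in
open scoped Matrix.Norms.L2Operator in
theorem stmt_10_aux {n : ℕ} (A B : Matrix (Fin n) (Fin n) ℂ)
    (hA : A.IsHermitian) (hB : B.IsHermitian)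
    (S₁ S₂ : Set ℝ) (δ α β : ℝ) (hδ : 0 < δ) (hαβ : α ≤ β)
    (hS₁ : S₁ ⊆ Set.Icc α β)
    (hS₂ : S₂ ⊆ Set.Iic (α - δ) ∪ Set.Ici (β + δ)) :
    opNorm (spectralProj hA S₁ * spectralProj hB S₂) ≤ (1 / δ) * opNorm (A - B) := by
  classical
  have hopNorm : ∀ X : Matrix (Fin n) (Fin n) ℂ, opNorm X = ‖X‖ := fun _ => rfl
  set U := (hA.eigenvectorUnitary : Matrix (Fin n) (Fin n) ℂ) with hUdef
  set V := (hB.eigenvectorUnitary : Matrix (Fin n) (Fin n) ℂ) with hVdef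
  set a := hA.eigenvalues with hadef
  set b := hB.eigenvalues with hbdef
  set c : ℝ := (α + β) / 2 with hcdef
  set r : ℝ := (β - α) / 2 with hrdef
  have hr : 0 ≤ r := by rw [hrdef]; linarith
  have hrδ : 0 < r + δ := by linarith
  set dP := Matrix.diagonal (fun i => if a i ∈ S₁ then (1:ℂ) else 0) with hdP
  set dQ := Matrix.diagonal (fun i => if b i ∈ S₂ then (1:ℂ) else 0) with hdQ
  set da := Matrix.diagonal (fun i => ((a i : ℝ) : ℂ)) with hda
  set db := Matrix.diagonal (fun i => ((b i : ℝ) : ℂ)) with hdb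
  set da' := Matrix.diagonal (fun i => if a i ∈ S₁ then ((a i : ℂ) - (c : ℂ)) else 0) with hda'
  set e := Matrix.diagonal
    (fun j => (if b j ∈ S₂ then ((b j : ℂ) - (c : ℂ)) else ((r + δ : ℝ) : ℂ))⁻¹) with hedef
  set K := star U * V with hK
  set Y := dP * K * dQ with hY
  set W := da * Y - Y * db with hW
  -- unitarity
  have hU1 : star U * U = 1 := Unitary.coe_star_mul_self hA.eigenvectorUnitary
  have hV1 : star V * V = 1 := Unitary.coe_star_mul_self hB.eigenvectorUnitary
  have cU : ∀ X : Matrix (Fin n) (Fin n) ℂ, star U * (U * X) = X := fun X => by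
    rw [← Matrix.mul_assoc, hU1, Matrix.one_mul]
  -- spectral theorems
  have specA : A = U * da * star U := hA.spectral_theorem
  have specB : B = V * db * star V := hB.spectral_theorem
  have hP : spectralProj hA S₁ = U * dP * star U := rfl
  have hQ : spectralProj hB S₂ = V * dQ * star V := rfl
  -- conjugated versions
  have h1 : star U * A * V = da * K := by
    rw [specA]; simp only [hK, Matrix.mul_assoc, cU]
  have h2 : star U * B * V = K * db := by
    rw [specB]; simp only [hK, Matrix.mul_assoc, hV1, Matrix.mul_one]
  have h1' : ∀ X : Matrix (Fin n) (Fin n) ℂ,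
      star U * (A * (V * X)) = da * (K * X) := fun X => by
    rw [show star U * (A * (V * X)) = (star U * A * V) * X by
      simp only [Matrix.mul_assoc], h1, Matrix.mul_assoc]
  have h2' : ∀ X : Matrix (Fin n) (Fin n) ℂ,
      star U * (B * (V * X)) = K * (db * X) := fun X => by
    rw [show star U * (B * (V * X)) = (star U * B * V) * X by
      simp only [Matrix.mul_assoc], h2, Matrix.mul_assoc]
  -- diagonal commutations
  have hcomm1 : dP * da = da * dP := by
    rw [hdP, hda, Matrix.diagonal_mul_diagonal, Matrix.diagonal_mul_diagonal]
    exact congrArg Matrix.diagonal (funext fun i => mul_comm _ _)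
  have hcomm2 : db * dQ = dQ * db := by
    rw [hdQ, hdb, Matrix.diagonal_mul_diagonal, Matrix.diagonal_mul_diagonal]
    exact congrArg Matrix.diagonal (funext fun i => mul_comm _ _)
  have swap1 : ∀ Z : Matrix (Fin n) (Fin n) ℂ, dP * (da * Z) = da * (dP * Z) := fun Z => by
    rw [← Matrix.mul_assoc, hcomm1, Matrix.mul_assoc]
  have swap2 : ∀ Z : Matrix (Fin n) (Fin n) ℂ, db * (dQ * Z) = dQ * (db * Z) := fun Z => by
    rw [← Matrix.mul_assoc, hcomm2, Matrix.mul_assoc]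
  -- the key conjugation identity
  have key : spectralProj hA S₁ * (A - B) * spectralProj hB S₂ = U * W * star V := by
    rw [hP, hQ, hW, hY]
    simp only [Matrix.mul_sub, Matrix.sub_mul, Matrix.mul_assoc, h1', h2', swap1, swap2]
  have hPQ : spectralProj hA S₁ * spectralProj hB S₂ = U * Y * star V := by
    rw [hP, hQ, hY]; simp only [hK, Matrix.mul_assoc]
  -- unitary invariance of the norm
  have hUinv : ∀ X : Matrix (Fin n) (Fin n) ℂ, ‖U * X‖ = ‖X‖ := fun X =>
    CStarRing.norm_mem_unitary_mul X hA.eigenvectorUnitary.prop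
  have hVinv : ∀ X : Matrix (Fin n) (Fin n) ℂ, ‖X * star V‖ = ‖X‖ := fun X =>
    CStarRing.norm_mul_mem_unitary X (Unitary.star_mem hB.eigenvectorUnitary.prop)
  have hUinv' : ∀ X : Matrix (Fin n) (Fin n) ℂ, ‖X * star U‖ = ‖X‖ := fun X =>
    CStarRing.norm_mul_mem_unitary X (Unitary.star_mem hA.eigenvectorUnitary.prop)
  have hVinv' : ∀ X : Matrix (Fin n) (Fin n) ℂ, ‖V * X‖ = ‖X‖ := fun X =>
    CStarRing.norm_mem_unitary_mul X hB.eigenvectorUnitary.prop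
  -- spectral data bounds
  have hav : ∀ i, a i ∈ S₁ → α ≤ a i ∧ a i ≤ β := fun i hi => (hS₁ hi : _)
  have hbv : ∀ j, b j ∈ S₂ → b j ≤ α - δ ∨ β + δ ≤ b j := fun j hj => hS₂ hj
  have hbne : ∀ j, b j ∈ S₂ → ((b j : ℂ) - (c : ℂ)) ≠ 0 := by
    intro j hj
    have : b j ≠ c := by rcases hbv j hj with h | h <;> rw [hcdef] <;> intro hh <;> nlinarith
    intro hh
    exact this (by exact_mod_cast sub_eq_zero.mp hh)
  -- Schur-type entrywise identity
  have hid : Y = (da' * Y - W) * e := by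
    rw [hW, hY, hda', hedef, hdP, hdQ, hda, hdb]
    ext i j
    simp only [Matrix.sub_apply, Matrix.diagonal_mul, Matrix.mul_diagonal]
    by_cases hpi : a i ∈ S₁ <;> by_cases hqj : b j ∈ S₂ <;> simp only [hpi, hqj, if_true, if_false]
    · have hne := hbne j hqj
      field_simp
      ring
    · ring
    · ring
    · ring
  -- norm bounds on the pieces
  have hnda' : ‖da'‖ ≤ r := by
    rw [hda']
    refine diag_norm_le' _ hr fun i => ?_
    by_cases hpi : a i ∈ S₁
    · simp only [hpi, if_true]
      rw [show (a i : ℂ) - (c : ℂ) = ((a i - c : ℝ) : ℂ) by push_cast; ring,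
        Complex.norm_real, Real.norm_eq_abs]
      have := hav i hpi
      rw [abs_le]
      constructor <;> rw [hcdef, hrdef] <;> [linarith [this.1]; linarith [this.2]]
    · simp [hpi, hr]
  have he_norm : ‖e‖ ≤ (r + δ)⁻¹ := by
    rw [hedef]
    refine diag_norm_le' _ (by positivity) fun j => ?_
    rw [norm_inv]
    by_cases hqj : b j ∈ S₂
    · simp only [hqj, if_true]
      have hge : r + δ ≤ ‖(b j : ℂ) - (c : ℂ)‖ := by
        rw [show (b j : ℂ) - (c : ℂ) = ((b j - c : ℝ) : ℂ) by push_cast; ring,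
          Complex.norm_real, Real.norm_eq_abs]
        rcases hbv j hqj with h | h
        · rw [abs_sub_comm, abs_of_nonneg (by rw [hcdef]; linarith), hcdef, hrdef]; linarith
        · rw [abs_of_nonneg (by rw [hcdef]; linarith), hcdef, hrdef]; linarith
      exact inv_anti₀ hrδ hge
    · simp only [hqj, if_false]
      rw [Complex.norm_real, Real.norm_eq_abs, abs_of_pos hrδ]
  have hPn : ‖spectralProj hA S₁‖ ≤ 1 := by
    rw [hP, Matrix.mul_assoc, hUinv, hUinv', hdP]
    refine diag_norm_le' _ zero_le_one fun i => ?_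
    by_cases hpi : a i ∈ S₁ <;> simp [hpi]
  have hQn : ‖spectralProj hB S₂‖ ≤ 1 := by
    rw [hQ, Matrix.mul_assoc, hVinv', hVinv, hdQ]
    refine diag_norm_le' _ zero_le_one fun i => ?_
    by_cases hqi : b i ∈ S₂ <;> simp [hqi]
  have hnW : ‖W‖ ≤ ‖A - B‖ := by
    have hWeq : ‖W‖ = ‖spectralProj hA S₁ * (A - B) * spectralProj hB S₂‖ := by
      rw [key, Matrix.mul_assoc, hUinv, hVinv]
    rw [hWeq]
    calc ‖spectralProj hA S₁ * (A - B) * spectralProj hB S₂‖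
        ≤ ‖spectralProj hA S₁ * (A - B)‖ * ‖spectralProj hB S₂‖ := Matrix.l2_opNorm_mul _ _
      _ ≤ (‖spectralProj hA S₁‖ * ‖A - B‖) * ‖spectralProj hB S₂‖ :=
          mul_le_mul_of_nonneg_right (Matrix.l2_opNorm_mul _ _) (norm_nonneg _)
      _ ≤ (1 * ‖A - B‖) * 1 := by
          apply mul_le_mul (mul_le_mul_of_nonneg_right hPn (norm_nonneg _)) hQn
            (norm_nonneg _) (by positivity)
      _ = ‖A - B‖ := by ring
  -- the main estimate
  have hYb : ‖Y‖ ≤ (r * ‖Y‖ + ‖A - B‖) * (r + δ)⁻¹ := by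
    calc ‖Y‖ = ‖(da' * Y - W) * e‖ := by rw [← hid]
      _ ≤ ‖da' * Y - W‖ * ‖e‖ := Matrix.l2_opNorm_mul _ _
      _ ≤ (‖da'‖ * ‖Y‖ + ‖W‖) * ‖e‖ := by
          apply mul_le_mul_of_nonneg_right _ (norm_nonneg _)
          exact (norm_sub_le _ _).trans (add_le_add (Matrix.l2_opNorm_mul _ _) le_rfl)
      _ ≤ (r * ‖Y‖ + ‖A - B‖) * (r + δ)⁻¹ := by
          refine mul_le_mul ?_ he_norm (norm_nonneg _) (by positivity)
          exact add_le_add (mul_le_mul_of_nonneg_right hnda' (norm_nonneg _)) hnW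
  have h0 : ‖Y‖ * (r + δ) ≤ r * ‖Y‖ + ‖A - B‖ := by
    have h3 := mul_le_mul_of_nonneg_right hYb (le_of_lt hrδ)
    rwa [mul_assoc, inv_mul_cancel₀ hrδ.ne', mul_one] at h3
  have h4 : δ * ‖Y‖ ≤ ‖A - B‖ := by nlinarith [mul_comm ‖Y‖ r]
  rw [hopNorm, hopNorm, hPQ, Matrix.mul_assoc, hUinv, hVinv]
  calc ‖Y‖ = (1 / δ) * (δ * ‖Y‖) := by field_simp
    _ ≤ (1 / δ) * ‖A - B‖ := mul_le_mul_of_nonneg_left h4 (by positivity)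

theorem stmt_10 {n : ℕ} (A B : Matrix (Fin n) (Fin n) ℂ)
    (hA : A.IsHermitian) (hB : B.IsHermitian)
    (S₁ S₂ : Set ℝ) (δ α β : ℝ) (hδ : 0 < δ) (hαβ : α ≤ β)
    (hS₁ : S₁ ⊆ Set.Icc α β)
    (hS₂ : S₂ ⊆ Set.Iic (α - δ) ∪ Set.Ici (β + δ)) :
    opNorm (spectralProj hA S₁ * spectralProj hB S₂) ≤ (1 / δ) * opNorm (A - B) :=
  stmt_10_aux A B hA hB S₁ S₂ δ α β hδ hαβ hS₁ hS₂
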